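/- Let K > 0 and let τ be a real number with 0 < τ < π/(2√K). Define φ(t) = (1 − cos(√K · t))/K. Then there exist real numbers ν ∈ [1, 2), b > φ(τ), and δ > 0 such that for all t ∈ [0, τ]: ν · cos(√K · t)/(b − φ(t)) − 2K > δ. -/
import Mathlib


open Real

theorem stmt_1 (K τ : ℝ) (hK : 0 < K) (hτ : 0 < τ)
    (hτ' : τ < π / (2 * Real.sqrt K))
    (φ : ℝ → ℝ) (hφ : ∀ t, φ t = (1 - Real.cos (Real.sqrt K * t)) / K) :
    ∃ ν b δ : ℝ, 1 ≤ ν ∧ ν < 2 ∧ φ τ < b ∧ 0 < δ ∧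
      ∀ t ∈ Set.Icc (0 : ℝ) τ,
        ν * Real.cos (Real.sqrt K * t) / (b - φ t) - 2 * K > δ := by
  have hsK : 0 < Real.sqrt K := Real.sqrt_pos.mpr hK
  have h1 : Real.sqrt K * τ < π / 2 := by
    rw [lt_div_iff₀ (by positivity)] at hτ'
    nlinarith
  set c := Real.cos (Real.sqrt K * τ) with hcdef
  have hc : 0 < c := Real.cos_pos_of_mem_Ioo ⟨by nlinarith [Real.pi_pos, mul_pos hsK hτ], h1⟩
  have hc1 : c ≤ 1 := Real.cos_le_one _
  refine ⟨2 - c, (1 - c) / K + c / (4 * K), K * c / 4, by linarith, by linarith, ?_, by positivity, ?_⟩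
  · rw [hφ]; have : 0 < c / (4 * K) := by positivity
    linarith
  · intro t ht
    obtain ⟨ht0, htτ⟩ := ht
    set x := Real.cos (Real.sqrt K * t) with hxdef
    have hxc : c ≤ x := by
      apply Real.cos_le_cos_of_nonneg_of_le_pi (by positivity) (by nlinarith [Real.pi_pos])
      nlinarith
    have hx1 : x ≤ 1 := Real.cos_le_one _
    have hden : (0:ℝ) < x - 3 * c / 4 := by linarith
    have hb : (1 - c) / K + c / (4 * K) - φ t = (x - 3 * c / 4) / K := by
      rw [hφ]; field_simp; ring
    rw [gt_iff_lt, hb, div_div_eq_mul_div, lt_sub_iff_add_lt, lt_div_iff₀ hden]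
    nlinarith [mul_pos hK hc, sq_nonneg c]
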